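/- Consider the system dy/dτ = -(y + (1/√6)(W(z)+N))(1-y²), dz/dτ = √(2/3)g(z)y on [-1,1]×[0,ε], with W, g ∈ C², W(0)=g(0)=0, W'(0)=g'(0)=0, g<0 on (0,ε], and N² < 6. Then the equilibrium p₋ = (-1, 0) is a past attractor in the following sense: there is a neighbourhood U of p₋ in [-1,1]×[0,ε] such that every solution starting in U ∩ ((-1,1)×(0,ε]) converges to p₋ as τ → -∞. -/

import Mathlib

open Real Filter Set

lemma mono_aux (f f' : ℝ → ℝ) (a b : ℝ)
    (hf : ∀ τ ∈ Icc a b, HasDerivAt f (f' τ) τ)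
    (h0 : ∀ τ ∈ Icc a b, 0 ≤ f' τ) : MonotoneOn f (Icc a b) := by
  apply monotoneOn_of_deriv_nonneg (convex_Icc a b)
  · exact fun x hx => (hf x hx).continuousAt.continuousWithinAt
  · intro x hx
    rw [interior_Icc] at hx
    exact ((hf x ⟨hx.1.le, hx.2.le⟩).differentiableAt).differentiableWithinAt
  · intro x hx
    rw [interior_Icc] at hx
    rw [(hf x ⟨hx.1.le, hx.2.le⟩).deriv]
    exact h0 x ⟨hx.1.le, hx.2.le⟩

lemma gronwall_aux (f f' : ℝ → ℝ) (K : ℝ)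
    (hf : ∀ τ ∈ Iic (0:ℝ), HasDerivAt f (f' τ) τ)
    (hle : ∀ τ ∈ Iic (0:ℝ), f' τ ≤ K * f τ) :
    ∀ τ ≤ (0:ℝ), f 0 * exp (K * τ) ≤ f τ := by
  intro τ hτ
  have hw : ∀ t ∈ Icc τ (0:ℝ), HasDerivAt (fun t => f t * exp (-K * t))
      ((f' t - K * f t) * exp (-K * t)) t := by
    intro t ht
    have h2 : HasDerivAt (fun t : ℝ => exp (-K * t)) (exp (-K * t) * (-K)) t := by
      have := ((hasDerivAt_id t).const_mul (-K)).exp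
      simpa using this
    have h1 := (hf t (mem_Iic.2 ht.2)).mul h2
    exact h1.congr_deriv (by ring)
  have anti : AntitoneOn (fun t => f t * exp (-K * t)) (Icc τ 0) := by
    have := mono_aux (fun t => -(f t * exp (-K * t)))
      (fun t => -((f' t - K * f t) * exp (-K * t))) τ 0
      (fun t ht => (hw t ht).neg)
      (fun t ht => by
        have h1 : f' t - K * f t ≤ 0 := sub_nonpos.2 (hle t ht.2)
        have h2 : (0:ℝ) < exp (-K * t) := exp_pos _
        have h3 : (f' t - K * f t) * exp (-K * t) ≤ 0 :=
          mul_nonpos_iff.2 (Or.inr ⟨h1, h2.le⟩)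
        simpa using neg_nonneg.2 h3)
    intro x hx y hy hxy
    have := this hx hy hxy
    simpa using this
  have h := anti ⟨le_rfl, hτ⟩ ⟨hτ, le_rfl⟩ hτ
  simp only [neg_zero, mul_zero, exp_zero, mul_one] at h
  have hp : (0:ℝ) < exp (K * τ) := exp_pos _
  calc f 0 * exp (K * τ) ≤ (f τ * exp (-K * τ)) * exp (K * τ) :=
        mul_le_mul_of_nonneg_right h hp.le
    _ = f τ := by rw [mul_assoc, ← exp_add]; ring_nf; simp

set_option maxHeartbeats 2000000 in
theorem p_minus_past_attractor (W g : ℝ → ℝ) (N eps : ℝ) (heps : 0 < eps)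
    (hW : ContDiff ℝ 2 W) (hg : ContDiff ℝ 2 g)
    (hW0 : W 0 = 0) (hg0 : g 0 = 0)
    (hW'0 : deriv W 0 = 0) (hg'0 : deriv g 0 = 0)
    (hgneg : ∀ z ∈ Ioc (0 : ℝ) eps, g z < 0)
    (hN : N ^ 2 < 6) :
    ∃ U ∈ nhds ((-1 : ℝ), (0 : ℝ)),
      ∀ y z : ℝ → ℝ,
        (∀ τ ≤ (0 : ℝ), HasDerivAt y
          (-(y τ + (1 / Real.sqrt 6) * (W (z τ) + N)) * (1 - y τ ^ 2)) τ) →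
        (∀ τ ≤ (0 : ℝ), HasDerivAt z (Real.sqrt (2 / 3) * g (z τ) * y τ) τ) →
        (∀ τ ≤ (0 : ℝ), y τ ∈ Icc (-1 : ℝ) 1 ∧ z τ ∈ Icc (0 : ℝ) eps) →
        (y 0, z 0) ∈ U → y 0 ∈ Ioo (-1 : ℝ) 1 → z 0 ∈ Ioc (0 : ℝ) eps →
        Tendsto (fun τ => (y τ, z τ)) atBot (nhds ((-1 : ℝ), (0 : ℝ))) := by
  have h6 : (0:ℝ) < Real.sqrt 6 := Real.sqrt_pos.2 (by norm_num)
  set c : ℝ := 1 / Real.sqrt 6 with hc_def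
  have hc : 0 < c := by positivity
  have hbabs : |c * N| < 1 := by
    have hNabs : |N| < Real.sqrt 6 := by
      apply abs_lt_of_sq_lt_sq _ h6.le
      rw [Real.sq_sqrt (by norm_num : (0:ℝ) ≤ 6)]
      exact hN
    rw [abs_mul, abs_of_pos hc, hc_def, div_mul_eq_mul_div, one_mul, div_lt_one h6]
    exact hNabs
  have hb := abs_lt.1 hbabs
  set ystar : ℝ := (min 0 (-(c * N)) - 1) / 2 with hystar_def
  have hm1 : -1 < min 0 (-(c * N)) := lt_min (by norm_num) (by linarith [hb.2])
  have hm2 : min 0 (-(c * N)) ≤ 0 := min_le_left _ _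
  have hy1 : -1 < ystar := by rw [hystar_def]; linarith
  have hy3 : ystar < 0 := by rw [hystar_def]; linarith
  have hy4 : ystar < -(c * N) := by
    have : ystar < min 0 (-(c * N)) := by rw [hystar_def]; linarith
    exact lt_of_lt_of_le this (min_le_right _ _)
  set eta : ℝ := -(c * N) - ystar with heta_def
  have heta : 0 < eta := by rw [heta_def]; linarith
  -- choose zstar via continuity of W at 0
  have hev : ∀ᶠ x in nhds (0:ℝ), |W x| < eta / (2 * c) := by
    have h1 : ContinuousAt W 0 := hW.continuous.continuousAt
    have h2 : Set.Ioo (-(eta / (2 * c))) (eta / (2 * c)) ∈ nhds (W 0) := by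
      rw [hW0]
      exact Ioo_mem_nhds (neg_lt_zero.2 (by positivity)) (by positivity)
    filter_upwards [h1 h2] with x hx
    exact abs_lt.2 ⟨hx.1, hx.2⟩
  obtain ⟨δ, hδpos, hδW⟩ := Metric.eventually_nhds_iff.1 hev
  set zstar : ℝ := min (δ/2) eps with hzstar_def
  have hz1 : 0 < zstar := lt_min (by linarith) heps
  have hz2 : zstar ≤ eps := min_le_right _ _
  have hWsmall : ∀ x ∈ Icc (0:ℝ) zstar, c * |W x| ≤ eta / 2 := by
    intro x hx
    have hxδ : dist x 0 < δ := by
      rw [Real.dist_eq, sub_zero, abs_of_nonneg hx.1]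
      have : x ≤ δ/2 := le_trans hx.2 (min_le_left _ _)
      linarith
    have h1 : |W x| < eta / (2 * c) := hδW hxδ
    have h2 : c * |W x| ≤ c * (eta / (2 * c)) :=
      mul_le_mul_of_nonneg_left h1.le hc.le
    calc c * |W x| ≤ c * (eta / (2 * c)) := h2
      _ = eta / 2 := by field_simp
  -- key drift estimate
  have hdrift : ∀ Y Z : ℝ, -1 ≤ Y → Y ≤ ystar → 0 ≤ Z → Z ≤ zstar →
      eta / 2 ≤ -(Y + c * (W Z + N)) := by
    intro Y Z h1 h2 h3 h4
    have h5 := hWsmall Z ⟨h3, h4⟩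
    have h6' : c * W Z ≤ c * |W Z| := mul_le_mul_of_nonneg_left (le_abs_self _) hc.le
    have h7 : c * (W Z + N) = c * W Z + c * N := mul_add _ _ _
    rw [heta_def] at h5 ⊢
    linarith
  refine ⟨Iio ystar ×ˢ Iio zstar, (isOpen_Iio.prod isOpen_Iio).mem_nhds ⟨hy1, hz1⟩, ?_⟩
  intro y z hy hz hbox hU hy0 hz0
  obtain ⟨hy0u, hz0u⟩ := hU
  simp only [mem_Iio] at hy0u hz0u
  -- bounds
  obtain ⟨M, hM⟩ := isCompact_Icc.exists_bound_of_continuousOn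
    (s := Icc (0:ℝ) eps) hW.continuous.continuousOn
  have hM0 : 0 ≤ M := le_trans (norm_nonneg _) (hM 0 ⟨le_rfl, heps.le⟩)
  obtain ⟨L, hL⟩ := isCompact_Icc.exists_bound_of_continuousOn
    (s := Icc (0:ℝ) eps) (hg.continuous_deriv one_le_two).continuousOn
  have hL0 : 0 ≤ L := le_trans (norm_nonneg _) (hL 0 ⟨le_rfl, heps.le⟩)
  have hgbound : ∀ x ∈ Icc (0:ℝ) eps, |g x| ≤ L * x := by
    intro x hx
    have := Convex.norm_image_sub_le_of_norm_deriv_le (f := g) (s := Icc (0:ℝ) eps)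
      (fun t _ => (hg.differentiable two_ne_zero).differentiableAt)
      hL (convex_Icc _ _) ⟨le_rfl, heps.le⟩ hx
    rw [hg0, sub_zero, sub_zero] at this
    rwa [Real.norm_eq_abs, Real.norm_eq_abs, abs_of_nonneg hx.1] at this
  -- Step B : strict bounds backwards in time
  set K₁ : ℝ := (1 + c * (M + |N|)) * 2 with hK₁_def
  have hypos : ∀ τ ≤ (0:ℝ), -1 < y τ := by
    have hd : ∀ τ ∈ Iic (0:ℝ), HasDerivAt (fun t => y t + 1)
        ((-(y τ + c * (W (z τ) + N)) * (1 - y τ)) * (y τ + 1)) τ := by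
      intro τ hτ
      have := (hy τ hτ).add_const 1
      exact this.congr_deriv (by ring)
    have hK : ∀ τ ∈ Iic (0:ℝ),
        (-(y τ + c * (W (z τ) + N)) * (1 - y τ)) * (y τ + 1) ≤ K₁ * (y τ + 1) := by
      intro τ hτ
      obtain ⟨hyI, hzI⟩ := hbox τ hτ
      have hWb : |W (z τ)| ≤ M := by
        have := hM _ hzI; rwa [Real.norm_eq_abs] at this
      have h1 : |(-(y τ + c * (W (z τ) + N)) * (1 - y τ))| ≤ K₁ := by
        rw [abs_mul, abs_neg]
        have ha : |y τ + c * (W (z τ) + N)| ≤ 1 + c * (M + |N|) := by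
          calc |y τ + c * (W (z τ) + N)| ≤ |y τ| + |c * (W (z τ) + N)| := abs_add_le _ _
            _ = |y τ| + c * |W (z τ) + N| := by rw [abs_mul, abs_of_pos hc]
            _ ≤ 1 + c * (M + |N|) := by
                have h2 : |y τ| ≤ 1 := abs_le.2 ⟨hyI.1, hyI.2⟩
                have h3 : |W (z τ) + N| ≤ M + |N| :=
                  le_trans (abs_add_le _ _) (add_le_add hWb le_rfl)
                have := mul_le_mul_of_nonneg_left h3 hc.le
                linarith
        have hb2 : |1 - y τ| ≤ 2 :=
          abs_le.2 ⟨by linarith [hyI.2], by linarith [hyI.1]⟩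
        calc |y τ + c * (W (z τ) + N)| * |1 - y τ| ≤ (1 + c * (M + |N|)) * 2 :=
              mul_le_mul ha hb2 (abs_nonneg _) (by positivity)
          _ = K₁ := rfl
      have h3 : 0 ≤ y τ + 1 := by linarith [hyI.1]
      calc (-(y τ + c * (W (z τ) + N)) * (1 - y τ)) * (y τ + 1)
          ≤ |(-(y τ + c * (W (z τ) + N)) * (1 - y τ))| * (y τ + 1) :=
            mul_le_mul_of_nonneg_right (le_abs_self _) h3
        _ ≤ K₁ * (y τ + 1) := mul_le_mul_of_nonneg_right h1 h3
    intro τ hτ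
    have h := gronwall_aux (fun t => y t + 1) _ K₁ hd hK τ hτ
    have hp : 0 < (y 0 + 1) * exp (K₁ * τ) := by
      have : 0 < y 0 + 1 := by linarith [hy0.1]
      positivity
    linarith
  have hzpos : ∀ τ ≤ (0:ℝ), 0 < z τ := by
    set K₂ : ℝ := Real.sqrt (2/3) * L with hK₂_def
    have hK : ∀ τ ∈ Iic (0:ℝ),
        Real.sqrt (2/3) * g (z τ) * y τ ≤ K₂ * z τ := by
      intro τ hτ
      obtain ⟨hyI, hzI⟩ := hbox τ hτ
      have hs23 : 0 ≤ Real.sqrt (2/3) := Real.sqrt_nonneg _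
      have h1 : g (z τ) * y τ ≤ |g (z τ)| * |y τ| := by
        calc g (z τ) * y τ ≤ |g (z τ) * y τ| := le_abs_self _
          _ = |g (z τ)| * |y τ| := abs_mul _ _
      have h2 : |g (z τ)| * |y τ| ≤ (L * z τ) * 1 := by
        apply mul_le_mul (hgbound _ hzI) (abs_le.2 ⟨hyI.1, hyI.2⟩) (abs_nonneg _)
        have := hzI.1; positivity
      calc Real.sqrt (2/3) * g (z τ) * y τ
          = Real.sqrt (2/3) * (g (z τ) * y τ) := mul_assoc _ _ _
        _ ≤ Real.sqrt (2/3) * ((L * z τ) * 1) :=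
            mul_le_mul_of_nonneg_left (le_trans h1 h2) hs23
        _ = K₂ * z τ := by rw [hK₂_def]; ring
    intro τ hτ
    have h := gronwall_aux z _ K₂ (fun s hs => hz s hs) hK τ hτ
    have hp : 0 < z 0 * exp (K₂ * τ) := by
      have := hz0.1; positivity
    linarith
  -- Step C : backward invariance of the box
  have hinv : ∀ τ ≤ (0:ℝ), y τ ≤ ystar ∧ z τ ≤ z 0 := by
    intro τb hτb
    set A : Set ℝ := {t : ℝ | t ∈ Icc τb 0 ∧ ∀ s ∈ Icc t 0, y s ≤ ystar ∧ z s ≤ z 0}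
      with hA_def
    have h0A : (0:ℝ) ∈ A := by
      refine ⟨⟨hτb, le_rfl⟩, ?_⟩
      intro s hs
      have hs0 : s = 0 := le_antisymm hs.2 hs.1
      rw [hs0]
      exact ⟨hy0u.le, le_rfl⟩
    have hAne : A.Nonempty := ⟨0, h0A⟩
    have hbdd : BddBelow A := ⟨τb, fun t ht => ht.1.1⟩
    set t₁ : ℝ := sInf A with ht₁_def
    have ht₁0 : t₁ ≤ 0 := csInf_le hbdd h0A
    have ht₁b : τb ≤ t₁ := le_csInf hAne (fun t ht => ht.1.1)
    have hA1 : ∀ s, t₁ < s → s ≤ 0 → y s ≤ ystar ∧ z s ≤ z 0 := by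
      intro s hs hs0
      obtain ⟨t, htA, hts⟩ := exists_lt_of_csInf_lt hAne hs
      exact htA.2 s ⟨hts.le, hs0⟩
    have hA2 : ∀ s ∈ Icc t₁ 0, y s ≤ ystar ∧ z s ≤ z 0 := by
      intro s hs
      rcases eq_or_lt_of_le hs.1 with heq | hlt
      · rcases lt_or_eq_of_le ht₁0 with ht₁neg | ht₁eq
        · have hcl : t₁ ∈ closure (Ioc t₁ 0) := by
            rw [closure_Ioc (ne_of_lt ht₁neg)]
            exact ⟨le_rfl, ht₁0⟩
          haveI hnb : (nhdsWithin t₁ (Ioc t₁ 0)).NeBot :=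
            mem_closure_iff_nhdsWithin_neBot.1 hcl
          have hyc : Tendsto y (nhdsWithin t₁ (Ioc t₁ 0)) (nhds (y t₁)) :=
            ((hy t₁ ht₁0).continuousAt).continuousWithinAt
          have hzc : Tendsto z (nhdsWithin t₁ (Ioc t₁ 0)) (nhds (z t₁)) :=
            ((hz t₁ ht₁0).continuousAt).continuousWithinAt
          have hevy : ∀ᶠ x in nhdsWithin t₁ (Ioc t₁ 0), y x ≤ ystar :=
            eventually_mem_nhdsWithin.mono (fun x hx => (hA1 x hx.1 hx.2).1)
          have hevz : ∀ᶠ x in nhdsWithin t₁ (Ioc t₁ 0), z x ≤ z 0 :=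
            eventually_mem_nhdsWithin.mono (fun x hx => (hA1 x hx.1 hx.2).2)
          rw [← heq]
          exact ⟨le_of_tendsto hyc hevy, le_of_tendsto hzc hevz⟩
        · rw [← heq, ht₁eq]
          exact ⟨hy0u.le, le_rfl⟩
      · exact hA1 s hlt hs.2
    rcases le_or_gt t₁ τb with hle | hgt
    · exact hA2 τb ⟨hle, hτb⟩
    · exfalso
      have hymono : MonotoneOn y (Icc t₁ 0) := by
        apply mono_aux y _ t₁ 0 (fun s hs => hy s hs.2)
        intro s hs
        obtain ⟨hsy, hsz⟩ := hA2 s hs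
        obtain ⟨hyI, hzI⟩ := hbox s hs.2
        have hd := hdrift (y s) (z s) hyI.1 hsy hzI.1 (le_trans hsz hz0u.le)
        have h1 : 0 ≤ 1 - y s ^ 2 := by nlinarith [hyI.1, hyI.2]
        exact mul_nonneg (le_trans (by linarith) hd) h1
      have hyt₁ : y t₁ < ystar :=
        lt_of_le_of_lt (hymono ⟨le_rfl, ht₁0⟩ ⟨ht₁0, le_rfl⟩ ht₁0) hy0u
      have hyev : ∀ᶠ s in nhds t₁, y s < ystar :=
        ((hy t₁ ht₁0).continuousAt).eventually_lt_const hyt₁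
      obtain ⟨δ', hδ'pos, hδ'⟩ := Metric.eventually_nhds_iff.1 hyev
      set t₂ : ℝ := max τb (t₁ - δ'/2) with ht₂_def
      have ht₂lt : t₂ < t₁ := max_lt hgt (by linarith)
      have ht₂b : τb ≤ t₂ := le_max_left _ _
      have ht₂0 : t₂ ≤ 0 := ht₂lt.le.trans ht₁0
      have hyle : ∀ s ∈ Icc t₂ 0, y s ≤ ystar := by
        intro s hs
        rcases le_or_gt t₁ s with h | h
        · exact (hA2 s ⟨h, hs.2⟩).1
        · apply le_of_lt
          apply hδ'
          rw [Real.dist_eq]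
          have h1 : t₁ - δ'/2 ≤ t₂ := le_max_right _ _
          have h2 : t₁ - δ'/2 ≤ s := le_trans h1 hs.1
          rw [abs_of_nonpos (by linarith)]
          linarith
      have hzmono : MonotoneOn z (Icc t₂ 0) := by
        apply mono_aux z _ t₂ 0 (fun s hs => hz s hs.2)
        intro s hs
        obtain ⟨hyI, hzI⟩ := hbox s hs.2
        have hgle : g (z s) ≤ 0 := (hgneg (z s) ⟨hzpos s hs.2, hzI.2⟩).le
        have hyneg : y s ≤ 0 := le_trans (hyle s hs) hy3.le
        have h1 : 0 ≤ g (z s) * y s := mul_nonneg_iff.2 (Or.inr ⟨hgle, hyneg⟩)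
        have hs23 : 0 ≤ Real.sqrt (2/3) := Real.sqrt_nonneg _
        calc (0:ℝ) ≤ Real.sqrt (2/3) * (g (z s) * y s) := mul_nonneg hs23 h1
          _ = Real.sqrt (2/3) * g (z s) * y s := (mul_assoc _ _ _).symm
      have ht₂A : t₂ ∈ A := by
        refine ⟨⟨ht₂b, ht₂0⟩, fun s hs => ⟨hyle s hs, ?_⟩⟩
        exact hzmono hs ⟨ht₂0, le_rfl⟩ hs.2
      exact absurd (csInf_le hbdd ht₂A) (not_le.2 ht₂lt)
  -- derivative signs everywhere backwards
  have hy'nn : ∀ s ≤ (0:ℝ), 0 ≤ -(y s + c * (W (z s) + N)) * (1 - y s ^ 2) := by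
    intro s hs
    obtain ⟨hsy, hsz⟩ := hinv s hs
    obtain ⟨hyI, hzI⟩ := hbox s hs
    have hd := hdrift (y s) (z s) hyI.1 hsy hzI.1 (le_trans hsz hz0u.le)
    have h1 : 0 ≤ 1 - y s ^ 2 := by nlinarith [hyI.1, hyI.2]
    exact mul_nonneg (le_trans (by linarith) hd) h1
  have hz'nn : ∀ s ≤ (0:ℝ), 0 ≤ Real.sqrt (2/3) * g (z s) * y s := by
    intro s hs
    obtain ⟨hsy, hsz⟩ := hinv s hs
    obtain ⟨hyI, hzI⟩ := hbox s hs
    have hgle : g (z s) ≤ 0 := (hgneg (z s) ⟨hzpos s hs, hzI.2⟩).le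
    have hyneg : y s ≤ 0 := le_trans hsy hy3.le
    have h1 : 0 ≤ g (z s) * y s := mul_nonneg_iff.2 (Or.inr ⟨hgle, hyneg⟩)
    have hs23 : 0 ≤ Real.sqrt (2/3) := Real.sqrt_nonneg _
    calc (0:ℝ) ≤ Real.sqrt (2/3) * (g (z s) * y s) := mul_nonneg hs23 h1
      _ = Real.sqrt (2/3) * g (z s) * y s := (mul_assoc _ _ _).symm
  have hymonoG : ∀ τ T : ℝ, τ ≤ T → T ≤ 0 → y τ ≤ y T := by
    intro τ T h1 h2
    exact mono_aux y _ τ 0 (fun s hs => hy s hs.2) (fun s hs => hy'nn s hs.2)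
      ⟨le_rfl, h1.trans h2⟩ ⟨h1, h2⟩ h1
  have hzmonoG : ∀ τ T : ℝ, τ ≤ T → T ≤ 0 → z τ ≤ z T := by
    intro τ T h1 h2
    exact mono_aux z _ τ 0 (fun s hs => hz s hs.2) (fun s hs => hz'nn s hs.2)
      ⟨le_rfl, h1.trans h2⟩ ⟨h1, h2⟩ h1
  -- Step D : the limits
  have hty : Tendsto y atBot (nhds (-1 : ℝ)) := by
    rw [tendsto_order]
    constructor
    · intro a ha
      exact eventually_atBot.2 ⟨0, fun τ hτ => lt_trans ha (hypos τ hτ)⟩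
    · intro a ha
      have hT : ∃ T ≤ (0:ℝ), y T < a := by
        by_contra hcon
        push_neg at hcon
        have ha' : a < ystar := lt_of_le_of_lt (hcon 0 le_rfl) hy0u
        set c₁ : ℝ := eta/2 * ((1 - ystar) * (1 + a)) with hc₁_def
        have hc₁pos : 0 < c₁ := by
          apply mul_pos (by linarith)
          exact mul_pos (by linarith) (by linarith)
        have hkey : ∀ s ≤ (0:ℝ), c₁ ≤ -(y s + c * (W (z s) + N)) * (1 - y s ^ 2) := by
          intro s hs
          obtain ⟨hsy, hsz⟩ := hinv s hs
          obtain ⟨hyI, hzI⟩ := hbox s hs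
          have hd := hdrift (y s) (z s) hyI.1 hsy hzI.1 (le_trans hsz hz0u.le)
          have hlow : a ≤ y s := hcon s hs
          have h1 : (1 - ystar) * (1 + a) ≤ 1 - y s ^ 2 := by nlinarith
          calc c₁ = eta/2 * ((1 - ystar) * (1 + a)) := rfl
            _ ≤ -(y s + c * (W (z s) + N)) * (1 - y s ^ 2) := by
                apply mul_le_mul hd h1 (by nlinarith) (by linarith)
        set T : ℝ := (-1 - y 0)/c₁ - 1 with hT_def
        have hneg : -1 - y 0 < 0 := by linarith [hy0.1]
        have hT0 : T ≤ 0 := by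
          have : (-1 - y 0)/c₁ < 0 := div_neg_of_neg_of_pos hneg hc₁pos
          rw [hT_def]; linarith
        have hmono := mono_aux (fun t => y t - c₁ * t)
          (fun t => -(y t + c * (W (z t) + N)) * (1 - y t ^ 2) - c₁) T 0
          (fun s hs => by
            have := (hy s hs.2).sub ((hasDerivAt_id s).const_mul c₁)
            exact this.congr_deriv (by ring))
          (fun s hs => sub_nonneg.2 (hkey s hs.2))
        have h2 := hmono ⟨le_rfl, hT0⟩ ⟨hT0, le_rfl⟩ hT0
        simp only [mul_zero, sub_zero] at h2
        have hcT : c₁ * T = -1 - y 0 - c₁ := by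
          rw [hT_def, mul_sub, mul_one, mul_div_cancel₀ _ (ne_of_gt hc₁pos)]
        have hyT : y T ≤ -1 - c₁ := by linarith
        exact absurd (hypos T hT0) (by linarith)
      obtain ⟨T, hT0, hTa⟩ := hT
      exact eventually_atBot.2 ⟨T, fun τ hτ => lt_of_le_of_lt (hymonoG τ T hτ hT0) hTa⟩
  have htz : Tendsto z atBot (nhds (0 : ℝ)) := by
    rw [tendsto_order]
    constructor
    · intro a ha
      exact eventually_atBot.2 ⟨0, fun τ hτ => lt_trans ha (hzpos τ hτ)⟩
    · intro a ha
      have hT : ∃ T ≤ (0:ℝ), z T < a := by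
        by_contra hcon
        push_neg at hcon
        have haz0 : a ≤ z 0 := hcon 0 le_rfl
        obtain ⟨x₀, hx₀mem, hx₀max⟩ := isCompact_Icc.exists_isMaxOn
          (s := Icc a (z 0)) ⟨a, le_rfl, haz0⟩ hg.continuous.continuousOn
        have hx₀neg : g x₀ < 0 :=
          hgneg x₀ ⟨lt_of_lt_of_le ha hx₀mem.1, le_trans hx₀mem.2 hz0.2⟩
        have hs23pos : 0 < Real.sqrt (2/3) := Real.sqrt_pos.2 (by norm_num)
        set c₂ : ℝ := Real.sqrt (2/3) * (g x₀ * ystar) with hc₂_def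
        have hc₂pos : 0 < c₂ :=
          mul_pos hs23pos (mul_pos_of_neg_of_neg hx₀neg hy3)
        have hkey : ∀ s ≤ (0:ℝ), c₂ ≤ Real.sqrt (2/3) * g (z s) * y s := by
          intro s hs
          obtain ⟨hsy, hsz⟩ := hinv s hs
          have h1 : g (z s) ≤ g x₀ := hx₀max ⟨hcon s hs, hsz⟩
          have h3 : g x₀ * ystar ≤ g (z s) * y s := by nlinarith
          calc c₂ = Real.sqrt (2/3) * (g x₀ * ystar) := rfl
            _ ≤ Real.sqrt (2/3) * (g (z s) * y s) :=
                mul_le_mul_of_nonneg_left h3 hs23pos.le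
            _ = Real.sqrt (2/3) * g (z s) * y s := (mul_assoc _ _ _).symm
        set T : ℝ := (-(z 0))/c₂ - 1 with hT_def
        have hT0 : T ≤ 0 := by
          have h1 : (-(z 0))/c₂ < 0 := div_neg_of_neg_of_pos (by linarith [hz0.1]) hc₂pos
          rw [hT_def]; linarith
        have hmono := mono_aux (fun t => z t - c₂ * t)
          (fun t => Real.sqrt (2/3) * g (z t) * y t - c₂) T 0
          (fun s hs => by
            have := (hz s hs.2).sub ((hasDerivAt_id s).const_mul c₂)
            exact this.congr_deriv (by ring))
          (fun s hs => sub_nonneg.2 (hkey s hs.2))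
        have h2 := hmono ⟨le_rfl, hT0⟩ ⟨hT0, le_rfl⟩ hT0
        simp only [mul_zero, sub_zero] at h2
        have hcT : c₂ * T = -(z 0) - c₂ := by
          rw [hT_def, mul_sub, mul_one, mul_div_cancel₀ _ (ne_of_gt hc₂pos)]
        have hzT : z T ≤ -c₂ := by linarith
        exact absurd (hzpos T hT0) (by linarith)
      obtain ⟨T, hT0, hTa⟩ := hT
      exact eventually_atBot.2 ⟨T, fun τ hτ => lt_of_le_of_lt (hzmonoG τ T hτ hT0) hTa⟩
  exact hty.prodMk_nhds htz
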